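/- arXiv:2006.02849 — 4 statements merged into one kernel-verified Lean document; each statement's English description precedes it below -/
import Mathlib

section
/- The map q : ℝ₊* × ℝⁿ → ℝⁿ, (α, z) ↦ projection of z onto the closed ball B(0, α), is Lipschitz continuous: there is a constant L such that |q(α₁, z₁) − q(α₂, z₂)| ≤ L(|α₁ − α₂| + |z₁ − z₂|) for all α₁, α₂ > 0 and z₁, z₂ ∈ ℝⁿ. -/
/-- The Euclidean projection of `z ∈ ℝⁿ` onto the closed ball `B(0, α)`. -/
noncomputable def ballProj {n : ℕ} (α : ℝ) (z : EuclideanSpace ℝ (Fin n)) :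
    EuclideanSpace ℝ (Fin n) :=
  if ‖z‖ ≤ α then z else (α / ‖z‖) • z

lemma ballProj_eq {n : ℕ} {α : ℝ} (hα : 0 < α) (z : EuclideanSpace ℝ (Fin n)) :
    ballProj α z = min 1 (α / ‖z‖) • z := by
  unfold ballProj
  split_ifs with h
  · rcases eq_or_lt_of_le (norm_nonneg z) with h0 | h0
    · have : z = 0 := by simpa using h0.symm
      simp [this]
    · rw [min_eq_left, one_smul]
      rw [le_div_iff₀ h0]
      linarith
  · rw [min_eq_right]
    push_neg at h
    exact le_of_lt (by rw [div_lt_one (lt_trans hα h)]; exact h)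

lemma min_one_lip_aux (x y : ℝ) : min 1 x - min 1 y ≤ |x - y| := by
  rcases le_total 1 y with h | h
  · have h1 : min 1 x ≤ 1 := min_le_left _ _
    rw [min_eq_left h]
    calc min 1 x - 1 ≤ 0 := by linarith
      _ ≤ |x - y| := abs_nonneg _
  · rw [min_eq_right h]
    calc min 1 x - y ≤ x - y := by linarith [min_le_right 1 x]
      _ ≤ |x - y| := le_abs_self _

lemma min_one_lip (x y : ℝ) : |min 1 x - min 1 y| ≤ |x - y| := by
  rw [abs_sub_le_iff]
  exact ⟨min_one_lip_aux x y, (abs_sub_comm x y) ▸ min_one_lip_aux y x⟩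

lemma key (α a b : ℝ) (hα : 0 < α) (ha : 0 ≤ a) (hb : 0 ≤ b) :
    |min 1 (α / a) - min 1 (α / b)| * b ≤ |a - b| := by
  rcases eq_or_lt_of_le ha with rfl | ha
  · simp only [div_zero, min_eq_right (zero_le_one' ℝ), zero_sub, abs_neg]
    have h1 : |min 1 (α / b)| ≤ 1 := by
      rw [abs_of_nonneg (le_min zero_le_one (div_nonneg hα.le hb))]
      exact min_le_left _ _
    calc |min 1 (α / b)| * b ≤ 1 * b := mul_le_mul_of_nonneg_right h1 hb
      _ = |b| := by rw [one_mul, abs_of_nonneg hb]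
  rcases eq_or_lt_of_le hb with rfl | hb
  · simp
  rcases le_or_gt a α with hA | hA <;> rcases le_or_gt b α with hB | hB
  · rw [min_eq_left (by rw [le_div_iff₀ ha]; linarith),
      min_eq_left (by rw [le_div_iff₀ hb]; linarith)]
    simp [abs_nonneg]
  · -- a ≤ α < b
    rw [min_eq_left (by rw [le_div_iff₀ ha]; linarith),
      min_eq_right (le_of_lt (by rw [div_lt_one hb]; exact hB))]
    rw [abs_of_nonneg (by rw [sub_nonneg, div_le_one hb]; linarith),
      abs_of_nonpos (by linarith)]
    field_simp
    linarith
  · -- b ≤ α < a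
    rw [min_eq_right (le_of_lt (by rw [div_lt_one ha]; exact hA)),
      min_eq_left (by rw [le_div_iff₀ hb]; linarith)]
    rw [abs_of_nonpos (by rw [sub_nonpos, div_le_one ha]; linarith),
      abs_of_nonneg (by linarith), neg_sub]
    have h' : (1 - α / a) * b * a = (a - α) * b := by field_simp
    nlinarith [sq_nonneg (a - b), mul_nonneg (sub_nonneg.mpr hB) hb.le]
  · -- α < a, α < b
    rw [min_eq_right (le_of_lt (by rw [div_lt_one ha]; exact hA)),
      min_eq_right (le_of_lt (by rw [div_lt_one hb]; exact hB))]
    rw [div_sub_div _ _ (ne_of_gt ha) (ne_of_gt hb), abs_div, abs_of_pos (mul_pos ha hb),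
      div_mul_eq_mul_div, div_le_iff₀ (mul_pos ha hb)]
    have : |α * b - a * α| = α * |b - a| := by
      rw [mul_comm a α, ← mul_sub, abs_mul, abs_of_pos hα]
    rw [this, abs_sub_comm b a]
    nlinarith [mul_nonneg (mul_nonneg (abs_nonneg (a - b)) hb.le) (sub_nonneg.mpr hA.le)]

lemma lip_alpha {n : ℕ} (α₁ α₂ : ℝ) (h₁ : 0 < α₁) (h₂ : 0 < α₂)
    (z : EuclideanSpace ℝ (Fin n)) :
    ‖ballProj α₁ z - ballProj α₂ z‖ ≤ |α₁ - α₂| := by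
  rw [ballProj_eq h₁, ballProj_eq h₂, ← sub_smul, norm_smul, Real.norm_eq_abs]
  rcases eq_or_lt_of_le (norm_nonneg z) with h0 | h0
  · rw [← h0, mul_zero]; exact abs_nonneg _
  · have : |min 1 (α₁ / ‖z‖) - min 1 (α₂ / ‖z‖)| ≤ |α₁ - α₂| / ‖z‖ := by
      calc |min 1 (α₁ / ‖z‖) - min 1 (α₂ / ‖z‖)| ≤ |α₁ / ‖z‖ - α₂ / ‖z‖| :=
            min_one_lip _ _
        _ = |α₁ - α₂| / ‖z‖ := by rw [div_sub_div_same, abs_div, abs_of_pos h0]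
    calc |min 1 (α₁ / ‖z‖) - min 1 (α₂ / ‖z‖)| * ‖z‖ ≤ (|α₁ - α₂| / ‖z‖) * ‖z‖ :=
          mul_le_mul_of_nonneg_right this (norm_nonneg z)
      _ = |α₁ - α₂| := div_mul_cancel₀ _ (ne_of_gt h0)

lemma lip_z {n : ℕ} (α : ℝ) (hα : 0 < α) (z₁ z₂ : EuclideanSpace ℝ (Fin n)) :
    ‖ballProj α z₁ - ballProj α z₂‖ ≤ 2 * ‖z₁ - z₂‖ := by
  rw [ballProj_eq hα, ballProj_eq hα]
  set c₁ := min 1 (α / ‖z₁‖) with hc₁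
  set c₂ := min 1 (α / ‖z₂‖) with hc₂
  have hc₁0 : 0 ≤ c₁ := le_min zero_le_one (div_nonneg hα.le (norm_nonneg _))
  have hc₁1 : c₁ ≤ 1 := min_le_left _ _
  have split : c₁ • z₁ - c₂ • z₂ = c₁ • (z₁ - z₂) + (c₁ - c₂) • z₂ := by
    rw [smul_sub, sub_smul]; abel
  rw [split]
  calc ‖c₁ • (z₁ - z₂) + (c₁ - c₂) • z₂‖
      ≤ ‖c₁ • (z₁ - z₂)‖ + ‖(c₁ - c₂) • z₂‖ := norm_add_le _ _
    _ ≤ ‖z₁ - z₂‖ + ‖z₁ - z₂‖ := by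
        gcongr
        · rw [norm_smul, Real.norm_eq_abs, abs_of_nonneg hc₁0]
          calc c₁ * ‖z₁ - z₂‖ ≤ 1 * ‖z₁ - z₂‖ :=
                mul_le_mul_of_nonneg_right hc₁1 (norm_nonneg _)
            _ = ‖z₁ - z₂‖ := one_mul _
        · rw [norm_smul, Real.norm_eq_abs]
          calc |c₁ - c₂| * ‖z₂‖ ≤ |‖z₁‖ - ‖z₂‖| :=
                key α ‖z₁‖ ‖z₂‖ hα (norm_nonneg _) (norm_nonneg _)
            _ ≤ ‖z₁ - z₂‖ := abs_norm_sub_norm_le _ _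
    _ = 2 * ‖z₁ - z₂‖ := by ring

/-- The map `(α, z) ↦ q(α, z)` (projection onto the ball of radius `α`) is Lipschitz
continuous on `ℝ₊* × ℝⁿ`. -/
theorem ballProj_lipschitz {n : ℕ} :
    ∃ L : ℝ, ∀ α₁ α₂ : ℝ, 0 < α₁ → 0 < α₂ →
      ∀ z₁ z₂ : EuclideanSpace ℝ (Fin n),
        ‖ballProj α₁ z₁ - ballProj α₂ z₂‖ ≤ L * (|α₁ - α₂| + ‖z₁ - z₂‖) := by
  refine ⟨2, fun α₁ α₂ h₁ h₂ z₁ z₂ => ?_⟩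
  calc ‖ballProj α₁ z₁ - ballProj α₂ z₂‖
      ≤ ‖ballProj α₁ z₁ - ballProj α₂ z₁‖ + ‖ballProj α₂ z₁ - ballProj α₂ z₂‖ :=
        norm_sub_le_norm_sub_add_norm_sub _ _ _
    _ ≤ |α₁ - α₂| + 2 * ‖z₁ - z₂‖ :=
        add_le_add (lip_alpha α₁ α₂ h₁ h₂ z₁) (lip_z α₂ h₂ z₁ z₂)
    _ ≤ 2 * (|α₁ - α₂| + ‖z₁ - z₂‖) := by
        have := abs_nonneg (α₁ - α₂); linarith
end

section
/- The map q : ℝ₊* × ℝⁿ → ℝⁿ (projection onto the ball of radius α) is directionally differentiable: for every (α, z) with α > 0 and every direction (β, h) ∈ ℝ × ℝⁿ, the limit dq((α,z);(β,h)) := lim_{t→0⁺} (q(α+tβ, z+th) − q(α,z))/t exists and equals h if |z| < α; equals h − max₊(h·(z/|z|) − β)·(z/|z|) if |z| = α; and equals (α/|z|)(h − (z·h)z/|z|²) + β z/|z| if |z| > α. -/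
open Filter Topology
open scoped RealInnerProductSpace

/-- The directional derivative of the ball projection `q` at `(α, z)` in the direction
`(β, h)`. -/
noncomputable def ballProjDeriv {n : ℕ} (α : ℝ) (z : EuclideanSpace ℝ (Fin n)) (β : ℝ)
    (h : EuclideanSpace ℝ (Fin n)) : EuclideanSpace ℝ (Fin n) :=
  if ‖z‖ < α then h
  else if ‖z‖ = α then
    h - (max 0 ((inner ℝ h (‖z‖⁻¹ • z) : ℝ) - β)) • (‖z‖⁻¹ • z)
  else (α / ‖z‖) • (h - ((‖z‖ ^ 2)⁻¹ * (inner ℝ z h : ℝ)) • z) + (β / ‖z‖) • z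

section Aux

variable {n : ℕ}

lemma path_hasDerivAt (z h : EuclideanSpace ℝ (Fin n)) :
    HasDerivAt (fun t : ℝ => z + t • h) h 0 := by
  simpa using ((hasDerivAt_id (0 : ℝ)).smul_const h).const_add z

lemma norm_path_hasDerivAt (z h : EuclideanSpace ℝ (Fin n)) (hz : z ≠ 0) :
    HasDerivAt (fun t : ℝ => ‖z + t • h‖) (⟪z, h⟫ / ‖z‖) 0 := by
  have hinner : HasDerivAt (fun t : ℝ => ⟪z + t • h, z + t • h⟫)
      (2 * ⟪z, h⟫) 0 := by
    have := (path_hasDerivAt z h).inner ℝ (path_hasDerivAt z h)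
    simpa [real_inner_comm z h, two_mul] using this
  have hne : ⟪z + (0 : ℝ) • h, z + (0 : ℝ) • h⟫ ≠ 0 := by
    simp only [zero_smul, add_zero]
    rw [real_inner_self_eq_norm_sq]
    exact pow_ne_zero 2 (norm_ne_zero_iff.mpr hz)
  have hsqrt := (Real.hasDerivAt_sqrt hne).comp 0 hinner
  have heq : (fun t : ℝ => Real.sqrt ⟪z + t • h, z + t • h⟫) =
      fun t : ℝ => ‖z + t • h‖ := by
    funext t
    rw [real_inner_self_eq_norm_sq, Real.sqrt_sq (norm_nonneg _)]
  have hval : Real.sqrt ⟪z + (0 : ℝ) • h, z + (0 : ℝ) • h⟫ = ‖z‖ := by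
    simp only [zero_smul, add_zero]
    rw [real_inner_self_eq_norm_sq, Real.sqrt_sq (norm_nonneg z)]
  rw [Function.comp_def, heq] at hsqrt
  refine hsqrt.congr_deriv ?_
  rw [hval]
  have h0 : ‖z‖ ≠ 0 := norm_ne_zero_iff.mpr hz
  field_simp

lemma outer_hasDerivAt (α β : ℝ) (z h : EuclideanSpace ℝ (Fin n)) (hz : z ≠ 0) :
    HasDerivAt (fun t : ℝ => ((α + t * β) / ‖z + t • h‖) • (z + t • h))
      ((β / ‖z‖ - α * ⟪z, h⟫ / ‖z‖ ^ 3) • z + (α / ‖z‖) • h) 0 := by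
  have h0 : ‖z‖ ≠ 0 := norm_ne_zero_iff.mpr hz
  have hnum : HasDerivAt (fun t : ℝ => α + t * β) β 0 := by
    simpa using ((hasDerivAt_id (0 : ℝ)).mul_const β).const_add α
  have hden := norm_path_hasDerivAt z h hz
  have hden0 : ‖z + (0 : ℝ) • h‖ ≠ 0 := by simpa using h0
  have hq := hnum.div hden hden0
  have := hq.smul (path_hasDerivAt z h)
  refine this.congr_deriv ?_
  simp only [zero_smul, add_zero, mul_zero, zero_mul, Pi.div_apply]
  match_scalars <;> field_simp <;> ring

end Aux

set_option maxHeartbeats 1600000 in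
/-- Directional differentiability of the ball projection `q : ℝ₊* × ℝⁿ → ℝⁿ`:
the one-sided difference quotients converge to the stated directional derivative. -/
theorem ballProj_dirDiff {n : ℕ} (α : ℝ) (hα : 0 < α) (z : EuclideanSpace ℝ (Fin n))
    (β : ℝ) (h : EuclideanSpace ℝ (Fin n)) :
    Tendsto (fun t : ℝ => t⁻¹ • (ballProj (α + t * β) (z + t • h) - ballProj α z))
      (𝓝[>] (0 : ℝ)) (𝓝 (ballProjDeriv α z β h)) := by
  set G : ℝ → EuclideanSpace ℝ (Fin n) :=
    fun t => ((α + t * β) / ‖z + t • h‖) • (z + t • h) with hGdef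
  have hpos : ∀ᶠ t in 𝓝[>] (0 : ℝ), 0 < t :=
    eventually_mem_nhdsWithin
  have hcontαβ : Tendsto (fun t : ℝ => α + t * β) (𝓝[>] (0 : ℝ)) (𝓝 α) := by
    have : ContinuousAt (fun t : ℝ => α + t * β) 0 := by fun_prop
    simpa using this.continuousWithinAt.tendsto
  have hαβ : ∀ᶠ t in 𝓝[>] (0 : ℝ), 0 < α + t * β :=
    hcontαβ.eventually (eventually_gt_nhds hα)
  have hcontN : Tendsto (fun t : ℝ => ‖z + t • h‖) (𝓝[>] (0 : ℝ)) (𝓝 ‖z‖) := by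
    have : ContinuousAt (fun t : ℝ => ‖z + t • h‖) 0 := by fun_prop
    simpa using this.continuousWithinAt.tendsto
  rcases lt_trichotomy ‖z‖ α with hlt | heq | hgt
  · -- interior case
    have hball : ballProj α z = z := if_pos hlt.le
    have hin : ∀ᶠ t in 𝓝[>] (0 : ℝ), ‖z + t • h‖ ≤ α + t * β := by
      have : Tendsto (fun t : ℝ => (α + t * β) - ‖z + t • h‖) (𝓝[>] (0 : ℝ))
          (𝓝 (α - ‖z‖)) := hcontαβ.sub hcontN
      filter_upwards [this.eventually (eventually_gt_nhds (by linarith : (0:ℝ) < α - ‖z‖))]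
        with t ht
      linarith
    have hEq : (fun t : ℝ => t⁻¹ • (ballProj (α + t * β) (z + t • h) - ballProj α z))
        =ᶠ[𝓝[>] (0 : ℝ)] fun _ => h := by
      filter_upwards [hpos, hin] with t ht hin
      have hproj : ballProj (α + t * β) (z + t • h) = z + t • h := if_pos hin
      rw [hproj, hball, add_sub_cancel_left, smul_smul, inv_mul_cancel₀ ht.ne', one_smul]
    rw [ballProjDeriv, if_pos hlt]
    exact Tendsto.congr' hEq.symm tendsto_const_nhds
  · -- boundary case
    have hz : z ≠ 0 := by
      intro hz0; rw [hz0] at heq; simp at heq; linarith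
    have h0 : ‖z‖ ≠ 0 := norm_ne_zero_iff.mpr hz
    have hball : ballProj α z = z := if_pos heq.le
    have hG0 : G 0 = z := by
      simp only [hGdef, zero_smul, add_zero, mul_zero, zero_mul, heq]
      rw [div_self hα.ne', one_smul]
    set c : ℝ := ⟪z, h⟫ - α * β with hc
    -- the comparison lemma
    have hcmp : ∀ t : ℝ, 0 < t → 0 < α + t * β →
        (‖z + t • h‖ ≤ α + t * β ↔ 2 * c + t * (‖h‖ ^ 2 - β ^ 2) ≤ 0) := by
      intro t ht htβ
      rw [← pow_le_pow_iff_left₀ (norm_nonneg _) htβ.le (two_ne_zero)]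
      have hexp : ‖z + t • h‖ ^ 2 = α ^ 2 + 2 * (t * ⟪z, h⟫) + t ^ 2 * ‖h‖ ^ 2 := by
        rw [norm_add_sq_real, real_inner_smul_right, norm_smul, Real.norm_eq_abs,
          mul_pow, sq_abs, heq]
      have key : ‖z + t • h‖ ^ 2 - (α + t * β) ^ 2
          = t * (2 * c + t * (‖h‖ ^ 2 - β ^ 2)) := by rw [hexp, hc]; ring
      constructor <;> intro hh <;> nlinarith [key, ht, mul_pos ht ht]
    have hinner_eq : (inner ℝ h (‖z‖⁻¹ • z) : ℝ) - β = c / α := by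
      rw [real_inner_smul_right, real_inner_comm, heq, hc]
      field_simp
    -- slope of G tends to its derivative
    have hd := outer_hasDerivAt α β z h hz
    set d : EuclideanSpace ℝ (Fin n) :=
      (β / ‖z‖ - α * ⟪z, h⟫ / ‖z‖ ^ 3) • z + (α / ‖z‖) • h with hddef
    have hslope : Tendsto (fun t => t⁻¹ • (G t - G 0)) (𝓝[>] (0 : ℝ)) (𝓝 d) := by
      have := (hasDerivAt_iff_tendsto_slope.mp hd).mono_left
        (nhdsWithin_mono 0 (by intro x hx; exact ne_of_gt hx : Set.Ioi (0:ℝ) ⊆ {0}ᶜ))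
      refine this.congr fun t => ?_
      rw [hGdef]
      simp [slope_def_module]
    -- eventual identity: difference quotient is h (inside) or slope of G (outside)
    have hDichot : ∀ᶠ t in 𝓝[>] (0 : ℝ),
        (t⁻¹ • (ballProj (α + t * β) (z + t • h) - ballProj α z) = h ∧
          ‖z + t • h‖ ≤ α + t * β) ∨
        (t⁻¹ • (ballProj (α + t * β) (z + t • h) - ballProj α z)
            = t⁻¹ • (G t - G 0) ∧ ¬ ‖z + t • h‖ ≤ α + t * β) := by
      filter_upwards [hpos, hαβ] with t ht htβ
      by_cases hle : ‖z + t • h‖ ≤ α + t * β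
      · left
        refine ⟨?_, hle⟩
        rw [hball, ballProj, if_pos hle, add_sub_cancel_left, smul_smul,
          inv_mul_cancel₀ ht.ne', one_smul]
      · right
        refine ⟨?_, hle⟩
        have hproj : ballProj (α + t * β) (z + t • h) = G t := by
          rw [hGdef]; exact if_neg hle
        rw [hproj, hball, ← hG0]
    rcases lt_trichotomy c 0 with hcneg | hczero | hcpos
    · -- eventually inside
      have hin : ∀ᶠ t in 𝓝[>] (0 : ℝ), ‖z + t • h‖ ≤ α + t * β := by
        have hcont : Tendsto (fun t : ℝ => 2 * c + t * (‖h‖ ^ 2 - β ^ 2))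
            (𝓝[>] (0 : ℝ)) (𝓝 (2 * c)) := by
          have : ContinuousAt (fun t : ℝ => 2 * c + t * (‖h‖ ^ 2 - β ^ 2)) 0 := by fun_prop
          simpa using this.continuousWithinAt.tendsto
        filter_upwards [hpos, hαβ,
          hcont.eventually (eventually_lt_nhds (by linarith : 2 * c < 0))] with t ht htβ hlt
        exact (hcmp t ht htβ).mpr hlt.le
      have hEq : (fun t : ℝ => t⁻¹ • (ballProj (α + t * β) (z + t • h) - ballProj α z))
          =ᶠ[𝓝[>] (0 : ℝ)] fun _ => h := by
        filter_upwards [hpos, hin] with t ht hin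
        have hproj : ballProj (α + t * β) (z + t • h) = z + t • h := if_pos hin
        rw [hproj, hball, add_sub_cancel_left, smul_smul,
          inv_mul_cancel₀ ht.ne', one_smul]
      have htarget : ballProjDeriv α z β h = h := by
        rw [ballProjDeriv, if_neg (by rw [heq]; exact lt_irrefl α), if_pos heq,
          hinner_eq, max_eq_left (div_nonpos_of_nonpos_of_nonneg hcneg.le hα.le)]
        simp
      rw [htarget]
      exact Tendsto.congr' hEq.symm tendsto_const_nhds
    · -- c = 0 : both branches tend to h
      have hd_eq : d = h := by
        have hzh : ⟪z, h⟫ = α * β := by linarith [hc ▸ hczero]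
        rw [hddef, heq, hzh]
        match_scalars <;> field_simp <;> ring
      have htarget : ballProjDeriv α z β h = h := by
        rw [ballProjDeriv, if_neg (by rw [heq]; exact lt_irrefl α), if_pos heq, hinner_eq, hczero]
        simp
      rw [htarget]
      rw [tendsto_iff_norm_sub_tendsto_zero]
      apply squeeze_zero'
        (g := fun t => ‖t⁻¹ • (G t - G 0) - h‖)
      · exact Eventually.of_forall fun t => norm_nonneg _
      · filter_upwards [hDichot] with t hDt
        rcases hDt with ⟨hEq, _⟩ | ⟨hEq, _⟩
        · rw [hEq]; simp
        · rw [hEq]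
      · have := hslope
        rw [hd_eq] at this
        simpa [tendsto_iff_norm_sub_tendsto_zero] using this
    · -- eventually strictly outside
      have hout : ∀ᶠ t in 𝓝[>] (0 : ℝ), ¬ ‖z + t • h‖ ≤ α + t * β := by
        have hcont : Tendsto (fun t : ℝ => 2 * c + t * (‖h‖ ^ 2 - β ^ 2))
            (𝓝[>] (0 : ℝ)) (𝓝 (2 * c)) := by
          have : ContinuousAt (fun t : ℝ => 2 * c + t * (‖h‖ ^ 2 - β ^ 2)) 0 := by fun_prop
          simpa using this.continuousWithinAt.tendsto
        filter_upwards [hpos, hαβ,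
          hcont.eventually (eventually_gt_nhds (by linarith : (0:ℝ) < 2 * c))] with t ht htβ hlt
        rw [hcmp t ht htβ]
        linarith
      have hEq : (fun t : ℝ => t⁻¹ • (ballProj (α + t * β) (z + t • h) - ballProj α z))
          =ᶠ[𝓝[>] (0 : ℝ)] fun t => t⁻¹ • (G t - G 0) := by
        filter_upwards [hout] with t hout
        have hproj : ballProj (α + t * β) (z + t • h) = G t := by
          rw [hGdef]; exact if_neg hout
        rw [hproj, hball, ← hG0]
      have htarget : ballProjDeriv α z β h = d := by
        have hscal : β / α - α * ⟪z, h⟫ / α ^ 3 = -(c / α * α⁻¹) := by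
          rw [hc]; field_simp; ring
        rw [ballProjDeriv, if_neg (by rw [heq]; exact lt_irrefl α), if_pos heq, hinner_eq,
          max_eq_right (div_pos hcpos hα).le, hddef, heq, hscal, div_self hα.ne',
          one_smul, smul_smul]
        rw [sub_eq_neg_add, neg_smul]
      rw [htarget]
      exact Tendsto.congr' hEq.symm hslope
  · -- exterior case
    have hz : z ≠ 0 := by
      intro hz0; rw [hz0] at hgt; simp at hgt; linarith
    have h0 : ‖z‖ ≠ 0 := norm_ne_zero_iff.mpr hz
    have hball : ballProj α z = (α / ‖z‖) • z := if_neg (not_le.mpr hgt)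
    have hG0 : G 0 = ballProj α z := by
      simp only [hGdef, zero_smul, add_zero, mul_zero, zero_mul, hball]
    have hout : ∀ᶠ t in 𝓝[>] (0 : ℝ), ¬ ‖z + t • h‖ ≤ α + t * β := by
      have : Tendsto (fun t : ℝ => ‖z + t • h‖ - (α + t * β)) (𝓝[>] (0 : ℝ))
          (𝓝 (‖z‖ - α)) := hcontN.sub hcontαβ
      filter_upwards [this.eventually (eventually_gt_nhds (by linarith : (0:ℝ) < ‖z‖ - α))]
        with t ht
      push_neg
      linarith
    have hd := outer_hasDerivAt α β z h hz
    have hslope : Tendsto (fun t => t⁻¹ • (G t - G 0)) (𝓝[>] (0 : ℝ))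
        (𝓝 ((β / ‖z‖ - α * ⟪z, h⟫ / ‖z‖ ^ 3) • z + (α / ‖z‖) • h)) := by
      have := (hasDerivAt_iff_tendsto_slope.mp hd).mono_left
        (nhdsWithin_mono 0 (by intro x hx; exact ne_of_gt hx : Set.Ioi (0:ℝ) ⊆ {0}ᶜ))
      refine this.congr fun t => ?_
      rw [hGdef]
      simp [slope_def_module]
    have hEq : (fun t : ℝ => t⁻¹ • (ballProj (α + t * β) (z + t • h) - ballProj α z))
        =ᶠ[𝓝[>] (0 : ℝ)] fun t => t⁻¹ • (G t - G 0) := by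
      filter_upwards [hout] with t hout
      have hproj : ballProj (α + t * β) (z + t • h) = G t := by
        rw [hGdef]; exact if_neg hout
      rw [hproj, ← hG0]
    have htarget : ballProjDeriv α z β h
        = (β / ‖z‖ - α * ⟪z, h⟫ / ‖z‖ ^ 3) • z + (α / ‖z‖) • h := by
      rw [ballProjDeriv, if_neg (not_lt.mpr hgt.le), if_neg (ne_of_gt hgt)]
      match_scalars <;> field_simp <;> ring
    rw [htarget]
    exact Tendsto.congr' hEq.symm hslope
end

section
/- For all α > 0, z ∈ ℝⁿ, β ∈ ℝ and h ∈ ℝⁿ, the directional derivative of the ball projection satisfies the bound |dq((α, z); (β, h))| ≤ |β| + |h|. -/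
lemma aux_case2 {n : ℕ} (β : ℝ) (h u : EuclideanSpace ℝ (Fin n)) (hu : ‖u‖ = 1) :
    ‖h - ((inner ℝ h u : ℝ) - β) • u‖ ≤ |β| + ‖h‖ := by
  set a : ℝ := (inner ℝ h u : ℝ) with ha
  have hCS : |a| ≤ ‖h‖ := by
    calc |a| ≤ ‖h‖ * ‖u‖ := abs_real_inner_le_norm h u
    _ = ‖h‖ := by rw [hu, mul_one]
  have hsq : ‖h - (a - β) • u‖ ^ 2 = ‖h‖ ^ 2 - a ^ 2 + β ^ 2 := by
    rw [norm_sub_sq_real, real_inner_smul_right, norm_smul, hu, ← ha]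
    simp only [mul_one, Real.norm_eq_abs, sq_abs]
    ring
  nlinarith [norm_nonneg (h - (a - β) • u), abs_nonneg β, norm_nonneg h, sq_abs β, sq_abs a]

lemma aux_case3 {n : ℕ} (z h : EuclideanSpace ℝ (Fin n)) (hz : z ≠ 0) :
    ‖h - ((‖z‖ ^ 2)⁻¹ * (inner ℝ z h : ℝ)) • z‖ ≤ ‖h‖ := by
  have hz' : (0:ℝ) < ‖z‖ := norm_pos_iff.mpr hz
  set a : ℝ := (inner ℝ z h : ℝ) with ha
  have hCS : |a| ≤ ‖z‖ * ‖h‖ := abs_real_inner_le_norm z h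
  have hsq : ‖h - ((‖z‖ ^ 2)⁻¹ * a) • z‖ ^ 2 = ‖h‖ ^ 2 - a ^ 2 / ‖z‖ ^ 2 := by
    rw [norm_sub_sq_real, real_inner_smul_right, norm_smul, real_inner_comm z h, ← ha]
    simp only [Real.norm_eq_abs, abs_mul, abs_inv, sq_abs]
    rw [mul_pow, mul_pow, sq_abs]
    field_simp
    simp only [abs_pow, abs_norm]
    ring
  nlinarith [norm_nonneg (h - ((‖z‖ ^ 2)⁻¹ * a) • z), norm_nonneg h, sq_nonneg a,
    sq_nonneg (a / ‖z‖), div_nonneg (sq_nonneg a) (sq_nonneg ‖z‖)]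

/-- Bound on the directional derivative of the ball projection:
`|dq((α, z); (β, h))| ≤ |β| + |h|`. -/
theorem ballProjDeriv_bound {n : ℕ} (α : ℝ) (hα : 0 < α)
    (z : EuclideanSpace ℝ (Fin n)) (β : ℝ) (h : EuclideanSpace ℝ (Fin n)) :
    ‖ballProjDeriv α z β h‖ ≤ |β| + ‖h‖ := by
  unfold ballProjDeriv
  split_ifs with h1 h2
  · have : (0:ℝ) ≤ |β| := abs_nonneg β
    linarith
  · -- ‖z‖ = α
    have hz : z ≠ 0 := by
      intro hz0
      rw [hz0, norm_zero] at h2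
      exact (ne_of_lt hα) h2
    set u : EuclideanSpace ℝ (Fin n) := ‖z‖⁻¹ • z with hu_def
    have hu : ‖u‖ = 1 := by
      rw [hu_def, norm_smul, norm_inv, norm_norm,
        inv_mul_cancel₀ (norm_ne_zero_iff.mpr hz)]
    rcases le_or_gt ((inner ℝ h u : ℝ) - β) 0 with hle | hlt
    · rw [max_eq_left hle, zero_smul, sub_zero]
      have : (0:ℝ) ≤ |β| := abs_nonneg β
      linarith
    · rw [max_eq_right hlt.le]
      exact aux_case2 β h u hu
  · -- ‖z‖ > α
    have hzα : α < ‖z‖ := lt_of_le_of_ne (not_lt.mp h1) (Ne.symm h2)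
    have hz' : (0:ℝ) < ‖z‖ := lt_trans hα hzα
    have hz : z ≠ 0 := norm_pos_iff.mp hz'
    calc ‖(α / ‖z‖) • (h - ((‖z‖ ^ 2)⁻¹ * (inner ℝ z h : ℝ)) • z) + (β / ‖z‖) • z‖
        ≤ ‖(α / ‖z‖) • (h - ((‖z‖ ^ 2)⁻¹ * (inner ℝ z h : ℝ)) • z)‖ + ‖(β / ‖z‖) • z‖ :=
          norm_add_le _ _
      _ ≤ ‖h‖ + |β| := by
          gcongr
          · rw [norm_smul, Real.norm_eq_abs, abs_of_nonneg (by positivity : (0:ℝ) ≤ α / ‖z‖)]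
            have h1' : α / ‖z‖ ≤ 1 := (div_le_one hz').mpr hzα.le
            have h2' := aux_case3 z h hz
            calc α / ‖z‖ * ‖h - ((‖z‖ ^ 2)⁻¹ * (inner ℝ z h : ℝ)) • z‖
                ≤ 1 * ‖h‖ := by
                  apply mul_le_mul h1' h2' (norm_nonneg _) zero_le_one
              _ = ‖h‖ := one_mul _
          · rw [norm_smul, Real.norm_eq_abs, abs_div, abs_of_nonneg hz'.le,
              div_mul_cancel₀ _ (ne_of_gt hz')]
      _ = |β| + ‖h‖ := add_comm _ _
end

section
/- Let S be a measure space with finite measure and let max₊ denote the Nemytskij (superposition) operator on L²(S) induced by the positive part function, i.e. (max₊ u)(x) = max(0, u(x)). Then this operator L²(S) → L²(S) is Lipschitz continuous with constant 1, and directionally differentiable: for all u, v ∈ L²(S), (max₊(u + t v) − max₊(u))/t converges strongly in L²(S) as t → 0⁺ to the function d max₊(u; v) defined pointwise by 0 where u < 0, max(0, v) where u = 0, and v where u > 0. -/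
open Filter Topology MeasureTheory
open scoped ENNReal NNReal

private lemma posPart_lip (a b : ℝ) : |max 0 a - max 0 b| ≤ |a - b| := by
  rw [max_comm 0 a, max_comm 0 b]
  exact abs_max_sub_max_le_abs a b 0

/-- The Nemytskij operator on `L²(S)` induced by the positive part function is
1-Lipschitz and directionally differentiable, the difference quotients converging
strongly in `L²` to the pointwise directional derivative of `max₊`. -/
theorem nemytskij_posPart_lipschitz_and_dirDiff
    {S : Type*} [MeasurableSpace S] (μ : Measure S) [IsFiniteMeasure μ] :
    (∀ u v : S → ℝ, MemLp u 2 μ → MemLp v 2 μ →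
      eLpNorm (fun x => max 0 (u x) - max 0 (v x)) 2 μ ≤
        1 * eLpNorm (fun x => u x - v x) 2 μ) ∧
    (∀ u v : S → ℝ, MemLp u 2 μ → MemLp v 2 μ →
      Tendsto
        (fun t : ℝ => eLpNorm
          (fun x => (max 0 (u x + t * v x) - max 0 (u x)) / t -
            (if u x < 0 then 0 else if u x = 0 then max 0 (v x) else v x)) 2 μ)
        (𝓝[>] (0 : ℝ)) (𝓝 0)) := by
  constructor
  · intro u v _ _
    rw [one_mul]
    refine eLpNorm_mono fun x => ?_
    simpa [Real.norm_eq_abs] using posPart_lip (u x) (v x)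
  · intro u v hu hv
    -- measurable representatives
    set u' : S → ℝ := hu.1.aemeasurable.mk u with hu'def
    set v' : S → ℝ := hv.1.aemeasurable.mk v with hv'def
    have hu'm : Measurable u' := hu.1.aemeasurable.measurable_mk
    have hv'm : Measurable v' := hv.1.aemeasurable.measurable_mk
    have hue : u =ᵐ[μ] u' := hu.1.aemeasurable.ae_eq_mk
    have hve : v =ᵐ[μ] v' := hv.1.aemeasurable.ae_eq_mk
    set d : S → ℝ := fun x =>
      if u' x < 0 then 0 else if u' x = 0 then max 0 (v' x) else v' x with hddef
    have hdm : Measurable d := by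
      refine Measurable.ite (measurableSet_lt hu'm measurable_const) measurable_const ?_
      exact Measurable.ite (hu'm (measurableSet_singleton 0))
        (measurable_const.max hv'm) hv'm
    set g : ℝ → S → ℝ := fun t x =>
      (max 0 (u' x + t * v' x) - max 0 (u' x)) / t - d x with hgdef
    have hgm : ∀ t, Measurable (g t) := fun t =>
      (((measurable_const.max (hu'm.add (hv'm.const_mul t))).sub
        (measurable_const.max hu'm)).div_const t).sub hdm
    -- the two families of eLpNorms agree
    have hcongr : (fun t : ℝ => eLpNorm
          (fun x => (max 0 (u x + t * v x) - max 0 (u x)) / t -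
            (if u x < 0 then 0 else if u x = 0 then max 0 (v x) else v x)) 2 μ)
        = fun t : ℝ => eLpNorm (g t) 2 μ := by
      funext t
      refine eLpNorm_congr_ae ?_
      filter_upwards [hue, hve] with x hux hvx
      simp [hgdef, hddef, hux, hvx]
    rw [hcongr]
    -- pointwise domination
    have hdom : ∀ t : ℝ, 0 < t → ∀ x, (‖g t x‖₊ : ℝ≥0∞) ≤ 2 * ‖v' x‖₊ := by
      intro t ht x
      have h1 : |max 0 (u' x + t * v' x) - max 0 (u' x)| ≤ t * |v' x| := by
        calc |max 0 (u' x + t * v' x) - max 0 (u' x)| ≤ |u' x + t * v' x - u' x| :=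
            posPart_lip _ _
          _ = t * |v' x| := by
            rw [add_sub_cancel_left, abs_mul, abs_of_pos ht]
      have h2 : |(max 0 (u' x + t * v' x) - max 0 (u' x)) / t| ≤ |v' x| := by
        rw [abs_div, abs_of_pos ht, div_le_iff₀ ht]
        exact h1.trans_eq (mul_comm _ _)
      have h3 : |d x| ≤ |v' x| := by
        simp only [hddef]
        split_ifs with h h'
        · simp [abs_nonneg]
        · rw [abs_of_nonneg (le_max_left 0 (v' x))]
          exact max_le (abs_nonneg _) (le_abs_self _)
        · exact le_refl _
      have : ‖g t x‖ ≤ 2 * ‖v' x‖ := by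
        simp only [hgdef, Real.norm_eq_abs]
        calc |(max 0 (u' x + t * v' x) - max 0 (u' x)) / t - d x|
            ≤ |(max 0 (u' x + t * v' x) - max 0 (u' x)) / t| + |d x| := abs_sub _ _
          _ ≤ |v' x| + |v' x| := add_le_add h2 h3
          _ = 2 * |v' x| := by ring
      have hnn : ‖g t x‖₊ ≤ 2 * ‖v' x‖₊ := by
        rw [← NNReal.coe_le_coe]
        push_cast
        exact this
      calc (‖g t x‖₊ : ℝ≥0∞) ≤ ((2 * ‖v' x‖₊ : ℝ≥0) : ℝ≥0∞) := by exact_mod_cast hnn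
        _ = 2 * ‖v' x‖₊ := by push_cast; ring
    -- pointwise convergence: g t x = 0 for small t > 0
    have hlim : ∀ x, ∀ᶠ t in 𝓝[>] (0 : ℝ), g t x = 0 := by
      intro x
      rcases lt_trichotomy (u' x) 0 with h | h | h
      · have hε : (0 : ℝ) < -u' x / (|v' x| + 1) :=
          div_pos (by linarith) (by positivity)
        filter_upwards [Ioo_mem_nhdsGT_of_mem ⟨le_refl 0, hε⟩] with t ht
        have ht0 : 0 < t := ht.1
        have hneg : u' x + t * v' x < 0 := by
          have : t * (|v' x| + 1) < -u' x := by
            rw [← lt_div_iff₀ (by positivity)]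
            exact ht.2
          nlinarith [le_abs_self (v' x), abs_nonneg (v' x), neg_abs_le (v' x)]
        simp [hgdef, hddef, h, max_eq_left hneg.le, max_eq_left h.le, ht0.ne']
      · have : ∀ t : ℝ, 0 < t → g t x = 0 := by
          intro t ht0
          have hmax : max 0 (t * v' x) = t * max 0 (v' x) := by
            rcases le_or_gt (v' x) 0 with hv0 | hv0
            · rw [max_eq_left (by nlinarith), max_eq_left hv0, mul_zero]
            · rw [max_eq_right (by nlinarith), max_eq_right hv0.le]
          simp only [hgdef, hddef, h, lt_irrefl, if_false, if_true]
          rw [zero_add, hmax, max_self, sub_zero, mul_div_cancel_left₀ _ ht0.ne', sub_self]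
        filter_upwards [self_mem_nhdsWithin] with t ht using this t ht
      · have hε : (0 : ℝ) < u' x / (|v' x| + 1) := by positivity
        filter_upwards [Ioo_mem_nhdsGT_of_mem ⟨le_refl 0, hε⟩] with t ht
        have ht0 : 0 < t := ht.1
        have hpos : 0 < u' x + t * v' x := by
          have : t * (|v' x| + 1) < u' x := by
            rw [← lt_div_iff₀ (by positivity)]
            exact ht.2
          nlinarith [neg_abs_le (v' x), abs_nonneg (v' x)]
        have hne : u' x ≠ 0 := h.ne'
        simp only [hgdef, hddef, not_lt.mpr h.le, if_false, hne, if_false,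
          max_eq_right hpos.le, max_eq_right h.le]
        rw [add_sub_cancel_left]
        field_simp
        ring
    -- dominated convergence for the lintegrals
    set F : ℝ → S → ℝ≥0∞ := fun t x => (‖g t x‖₊ : ℝ≥0∞) ^ (2 : ℝ) with hFdef
    have hbound_int : ∫⁻ x, ((2 : ℝ≥0∞) * ‖v' x‖₊) ^ (2 : ℝ) ∂μ ≠ ∞ := by
      have hv2 : MemLp (fun x => (2 : ℝ) * v' x) 2 μ :=
        ((hv.ae_eq hve).const_mul 2)
      have := lintegral_rpow_enorm_lt_top_of_eLpNorm_lt_top (f := fun x => (2 : ℝ) * v' x)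
        (two_ne_zero) (ENNReal.ofNat_ne_top) hv2.eLpNorm_lt_top
      rw [ENNReal.toReal_ofNat] at this
      refine ne_of_lt (lt_of_le_of_lt (le_of_eq ?_) this)
      refine lintegral_congr fun x => ?_
      congr 1
      rw [enorm_mul, ← enorm_eq_nnnorm]
      push_cast
      rw [show ‖(2:ℝ)‖ₑ = 2 from by exact_mod_cast Real.enorm_natCast 2]
    have hFlim : Tendsto (fun t => ∫⁻ x, F t x ∂μ) (𝓝[>] (0 : ℝ)) (𝓝 (∫⁻ _, 0 ∂μ)) := by
      refine tendsto_lintegral_filter_of_dominated_convergence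
        (fun x => ((2 : ℝ≥0∞) * ‖v' x‖₊) ^ (2 : ℝ)) ?_ ?_ hbound_int ?_
      · exact Eventually.of_forall fun t =>
          ((hgm t).nnnorm.coe_nnreal_ennreal).pow_const (2 : ℝ)
      · filter_upwards [self_mem_nhdsWithin] with t ht
        exact Eventually.of_forall fun x =>
          ENNReal.rpow_le_rpow (hdom t ht x) (by norm_num)
      · refine Eventually.of_forall fun x => ?_
        have h0 : ((0 : ℝ≥0∞) ^ (2:ℝ)) = 0 := by
          rw [ENNReal.zero_rpow_of_pos]; norm_num
        rw [show (0 : ℝ≥0∞) = (‖(0:ℝ)‖₊ : ℝ≥0∞) ^ (2 : ℝ) by simp [h0]]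
        refine tendsto_const_nhds.congr' ?_
        filter_upwards [hlim x] with t htx
        simp [hFdef, htx]
    rw [lintegral_zero] at hFlim
    have hcomp : Tendsto (fun t => (∫⁻ x, F t x ∂μ) ^ (1/2 : ℝ)) (𝓝[>] (0 : ℝ)) (𝓝 0) := by
      have := (ENNReal.continuous_rpow_const (y := (1/2 : ℝ))).tendsto 0 |>.comp hFlim
      rwa [show (0 : ℝ≥0∞) ^ (1/2 : ℝ) = 0 by
        rw [ENNReal.zero_rpow_of_pos]; norm_num] at this
    refine hcomp.congr fun t => ?_
    rw [eLpNorm_eq_lintegral_rpow_enorm_toReal two_ne_zero ENNReal.ofNat_ne_top,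
      ENNReal.toReal_ofNat]
    rfl
end
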